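/- Let Φ : M → ℝᵏ be continuous on a compact space M, let y₁ ≠ y₂ in Φ(M), and let ζ : C(M) → ℝ be monotone and satisfy ζ(f∘Φ) = (f(y₁)+f(y₂))/2 for all continuous f : ℝᵏ → ℝ. Then Φ⁻¹(y₁) ∪ Φ⁻¹(y₂) is ζ-superheavy: ζ(H) ≤ sup over Φ⁻¹(y₁)∪Φ⁻¹(y₂) of H, for every H ∈ C(M). -/
import Mathlib


/-- The union of the two fibers Φ⁻¹(y₁) ∪ Φ⁻¹(y₂) is ζ-superheavy. -/
theorem stmt_11 {M : Type*} [MetricSpace M] [CompactSpace M] [Nonempty M] {k : ℕ}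
    (Φ : C(M, Fin k → ℝ)) (y₁ y₂ : Fin k → ℝ) (hy : y₁ ≠ y₂)
    (hy₁ : y₁ ∈ Set.range Φ) (hy₂ : y₂ ∈ Set.range Φ)
    (ζ : C(M, ℝ) → ℝ)
    (hmono : ∀ H₁ H₂ : C(M, ℝ), (∀ x, H₁ x ≤ H₂ x) → ζ H₁ ≤ ζ H₂)
    (hζ : ∀ f : C((Fin k → ℝ), ℝ), ζ (f.comp Φ) = (f y₁ + f y₂) / 2) :
    ∀ H : C(M, ℝ), ζ H ≤ sSup (H '' (⇑Φ ⁻¹' {y₁} ∪ ⇑Φ ⁻¹' {y₂})) := by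
  intro H
  set S : Set M := ⇑Φ ⁻¹' {y₁} ∪ ⇑Φ ⁻¹' {y₂} with hS
  set s : ℝ := sSup (H '' S) with hs
  obtain ⟨x₁, hx₁⟩ := hy₁
  have hx₁S : x₁ ∈ S := Or.inl (by simp [hx₁])
  -- the image is bounded above
  have hScpt : IsCompact S := by
    apply IsCompact.union
    · exact (IsClosed.preimage Φ.continuous isClosed_singleton).isCompact
    · exact (IsClosed.preimage Φ.continuous isClosed_singleton).isCompact
  have hbdd : BddAbove (H '' S) := (hScpt.image H.continuous).bddAbove
  have hle : ∀ x ∈ S, H x ≤ s := fun x hx => le_csSup hbdd ⟨x, hx, rfl⟩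
  -- reduce to ε-approximation
  refine le_of_forall_pos_le_add fun ε hε => ?_
  -- the "bad" set
  set K : Set M := {x : M | s + ε ≤ H x} with hK
  have hKcl : IsClosed K := isClosed_le continuous_const H.continuous
  have hKcpt : IsCompact (⇑Φ '' K) := (hKcl.isCompact).image Φ.continuous
  have hdisj : Disjoint ({y₁, y₂} : Set (Fin k → ℝ)) (⇑Φ '' K) := by
    rw [Set.disjoint_left]
    rintro y (rfl | rfl) ⟨x, hxK, rfl⟩
    · have : H x ≤ s := hle x (Or.inl rfl)
      have := hK ▸ hxK; linarith [Set.mem_setOf_eq ▸ hxK]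
    · have : H x ≤ s := hle x (Or.inr rfl)
      linarith [Set.mem_setOf_eq ▸ hxK]
  obtain ⟨u, hu0, hu1, hu01⟩ := exists_continuous_zero_one_of_isClosed
    (((Set.finite_singleton y₂).insert y₁).isClosed) hKcpt.isClosed hdisj
  set C : ℝ := max ‖H‖ (s + ε) with hC
  have hCge : s + ε ≤ C := le_max_right _ _
  set f : C((Fin k → ℝ), ℝ) :=
    ⟨fun y => (s + ε) + u y * (C - (s + ε)), by fun_prop⟩ with hf
  have hHf : ∀ x, H x ≤ (f.comp Φ) x := by
    intro x
    simp only [ContinuousMap.comp_apply, hf, ContinuousMap.coe_mk]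
    by_cases hx : s + ε ≤ H x
    · have : Φ x ∈ ⇑Φ '' K := ⟨x, hx, rfl⟩
      have := hu1 this
      simp only [ContinuousMap.coe_one, Pi.one_apply] at this
      rw [this, one_mul]
      have : H x ≤ ‖H‖ := (abs_le.mp (H.norm_coe_le_norm x)).2
      have : H x ≤ C := this.trans (le_max_left _ _)
      linarith
    · push_neg at hx
      have h0 : 0 ≤ u (Φ x) := (hu01 (Φ x)).1
      nlinarith
  have key : ζ H ≤ ζ (f.comp Φ) := hmono _ _ hHf
  have hval : ζ (f.comp Φ) = s + ε := by
    rw [hζ f]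
    have h1 : u y₁ = 0 := by
      have := hu0 (Set.mem_insert y₁ {y₂}); simpa using this
    have h2 : u y₂ = 0 := by
      have := hu0 (Set.mem_insert_of_mem y₁ rfl); simpa using this
    simp [hf, h1, h2]

  linarith
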